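/- Let $n \ge 2$. The expected approximation error of RLS on the Peak problem with uniform random initialization equals $e^{[t]} = 1 - \frac{n+1}{2^n} + \frac{n}{2^n}\left(1 - \frac{1}{n}\right)^t$ for all $t \ge 0$. Equivalently, with $e = (1,1,\dots,1)'$, $R = \mathrm{diag}(1-\frac{1}{n}, 1, \dots, 1)$ ($n\times n$), and $p^{[0]}_i = \binom{n}{i}/2^n$, one has $e' R^t p^{[0]} = 1 - \frac{n+1}{2^n} + \frac{n}{2^n}(1-\frac{1}{n})^t$. -/

import Mathlib

open Matrix Finset

/-- expected approximation error of RLS on the Peak problem.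
Index `i : Fin n` corresponds to status `i+1` (number of zero bits). -/
theorem stmt_12 (n : ℕ) (hn : 2 ≤ n)
    (R : Matrix (Fin n) (Fin n) ℝ)
    (hR : R = Matrix.diagonal (fun i : Fin n =>
      if i.val = 0 then 1 - 1 / (n : ℝ) else 1))
    (e p : Fin n → ℝ)
    (he : ∀ i : Fin n, e i = 1)
    (hp : ∀ i : Fin n, p i = (n.choose (i.val + 1) : ℝ) / 2 ^ n)
    (t : ℕ) :
    e ⬝ᵥ (R ^ t).mulVec p
      = 1 - ((n : ℝ) + 1) / 2 ^ n + (n : ℝ) / 2 ^ n * (1 - 1 / n) ^ t := by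
  haveI : NeZero n := ⟨by omega⟩
  have hnat : ∑ i ∈ Finset.range n, n.choose (i + 1) = 2 ^ n - 1 := by
    have h := Nat.sum_range_choose n
    have h' := Finset.sum_range_succ' (fun i => n.choose i) n
    simp only [Nat.choose_zero_right] at h'
    omega
  have hreal : (∑ i : Fin n, ((n.choose (i.val + 1) : ℝ))) = 2 ^ n - 1 := by
    rw [Fin.sum_univ_eq_sum_range (fun i => ((n.choose (i + 1) : ℝ)))]
    rw [← Nat.cast_sum, hnat]
    have : (1:ℕ) ≤ 2 ^ n := Nat.one_le_two_pow
    push_cast [this]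
    ring
  subst hR
  have key : ∀ i : Fin n,
      e i * (((Matrix.diagonal (fun i : Fin n =>
        if i.val = 0 then 1 - 1 / (n : ℝ) else 1)) ^ t).mulVec p) i
      = (n.choose (i.val + 1) : ℝ) / 2 ^ n
        + (if i = 0 then ((1 - 1 / (n : ℝ)) ^ t - 1) * ((n : ℝ) / 2 ^ n) else 0) := by
    intro i
    rw [Matrix.diagonal_pow, Matrix.mulVec_diagonal, he, hp, one_mul, Pi.pow_apply]
    rcases eq_or_ne i 0 with h | h
    · subst h
      have hn0 : (n : ℝ) ≠ 0 := by
        simpa using (Nat.pos_of_ne_zero (NeZero.ne n)).ne'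
      simp [Fin.val_zero]
      ring
    · have hv : i.val ≠ 0 := by
        exact fun hv => h (Fin.ext (by simp [hv]))
      simp [hv, h]
  rw [dotProduct]
  rw [Finset.sum_congr rfl (fun i _ => key i), Finset.sum_add_distrib,
    Finset.sum_ite_eq' Finset.univ (0 : Fin n)]
  simp only [Finset.mem_univ, if_true]
  rw [← Finset.sum_div, hreal]
  have h2 : (2 : ℝ) ^ n ≠ 0 := by positivity
  field_simp
  ring
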